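/- arXiv:2402.02261 — 2 statements merged into one kernel-verified Lean document; each statement's English description precedes it below -/
import Mathlib

section
/- Let n > 1 be a natural number and G a finite group. The group ring (ℤ/nℤ)G is unit-regular if and only if n is squarefree and gcd(n, |G|) = 1. -/
/-- An element `x` of a ring is *strongly nil-clean* if `x = e + b` where `e` is an
idempotent, `b` is nilpotent, and `e` and `b` commute. -/
def IsStronglyNilClean {R : Type*} [Ring R] (x : R) : Prop :=
  ∃ e b : R, IsIdempotentElem e ∧ IsNilpotent b ∧ e * b = b * e ∧ x = e + b

/-- A ring `R` is *strongly unit nil-clean* if for every `x : R` there is a unit `u`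
such that `u * x` is strongly nil-clean. -/
def StronglyUnitNilClean (R : Type*) [Ring R] : Prop :=
  ∀ x : R, ∃ u : Rˣ, IsStronglyNilClean ((u : R) * x)

/-- A ring `R` is *unit-regular* if every `a : R` satisfies `a = a * u * a` for some unit `u`. -/
def UnitRegular (R : Type*) [Ring R] : Prop :=
  ∀ a : R, ∃ u : Rˣ, a = a * (u : R) * a

/-- A group is *locally finite* if every finitely generated subgroup is finite. -/
def LocallyFiniteGroup (G : Type*) [Group G] : Prop :=
  ∀ H : Subgroup G, H.FG → (H : Set G).Finite

/-- A subset `T` of a ring is *nilpotent* if there is `n ≥ 1` such that every product of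
`n` elements of `T` is zero. -/
def IsNilpotentSubset {R : Type*} [Ring R] (T : Set R) : Prop :=
  ∃ n : ℕ, 0 < n ∧ ∀ l : List R, (∀ a ∈ l, a ∈ T) → l.length = n → l.prod = 0

/-- A subset `S` of a ring is *locally nilpotent* if the non-unital subring generated by
any finite subset of `S` is nilpotent. -/
def IsLocallyNilpotentSet {R : Type*} [Ring R] (S : Set R) : Prop :=
  ∀ F : Finset R, (F : Set R) ⊆ S →
    IsNilpotentSubset ((NonUnitalSubring.closure (F : Set R) : Set R))

/-- A ring is *NI* if the set of nilpotent elements forms a two-sided ideal. -/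
def IsNIRing (R : Type*) [Ring R] : Prop :=
  ∃ I : TwoSidedIdeal R, ∀ x : R, x ∈ I ↔ IsNilpotent x

/-- A ring is *weakly 2-primal* if its set of nilpotent elements is a two-sided ideal
which is moreover locally nilpotent. -/
def Weakly2Primal (R : Type*) [Ring R] : Prop :=
  IsNIRing R ∧ IsLocallyNilpotentSet {x : R | IsNilpotent x}



open Function LinearMap

section Fin

universe w
variable {R : Type*} [Ring R]

lemma finite_linearMap {M N : Type*} [AddCommGroup M] [AddCommGroup N]
    [Module R M] [Module R N] [Finite M] [Finite N] : Finite (M →ₗ[R] N) :=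
  Finite.of_injective (fun f => (f : M → N)) DFunLike.coe_injective

lemma finite_submodule {M : Type*} [AddCommGroup M] [Module R M] [Finite M] :
    Finite (Submodule R M) :=
  Finite.of_injective (fun p => (p : Set M)) SetLike.coe_injective

lemma finite_quot {M : Type*} [AddCommGroup M] [Module R M] [Finite M] (K : Submodule R M) :
    Finite (M ⧸ K) :=
  Finite.of_surjective _ (Submodule.mkQ_surjective K)

noncomputable def homEquivSigma {M N : Type*} [AddCommGroup M] [AddCommGroup N]
    [Module R M] [Module R N] :
    (M →ₗ[R] N) ≃ Σ K : Submodule R M, {g : (M ⧸ K) →ₗ[R] N // Injective g} where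
  toFun f := ⟨LinearMap.ker f, ⟨(LinearMap.ker f).liftQ f le_rfl,
    LinearMap.ker_eq_bot.mp (Submodule.ker_liftQ_eq_bot _ _ _ le_rfl)⟩⟩
  invFun p := p.2.1.comp p.1.mkQ
  left_inv f := by
    conv_rhs => rw [← (LinearMap.ker f).liftQ_mkQ f le_rfl]
  right_inv := by
    rintro ⟨K, g, hg⟩
    have hker : LinearMap.ker (g.comp K.mkQ) = K := by
      rw [LinearMap.ker_comp, LinearMap.ker_eq_bot.mpr hg, Submodule.comap_bot,
        Submodule.ker_mkQ]
    have key : ∀ (K' : Submodule R M) (_ : K' = K) (g' : (M ⧸ K') →ₗ[R] N)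
        (hg' : Injective g'), g'.comp K'.mkQ = g.comp K.mkQ →
        (⟨K', g', hg'⟩ : Σ K : Submodule R M, {g : (M ⧸ K) →ₗ[R] N // Injective g}) =
          ⟨K, g, hg⟩ := by
      rintro K' rfl g' hg' hcomp
      have : g' = g := Submodule.linearMap_qext _ hcomp
      subst this
      rfl
    exact key _ hker _ _ (by rw [Submodule.liftQ_mkQ])

variable (A : Type*) [AddCommGroup A] [Module R A]

noncomputable def injEquivOfLinearEquiv {X Y : Type*} [AddCommGroup X] [Module R X]
    [AddCommGroup Y] [Module R Y] (e : X ≃ₗ[R] Y) :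
    {g : X →ₗ[R] A // Injective g} ≃ {g : Y →ₗ[R] A // Injective g} where
  toFun g := ⟨g.1.comp e.symm.toLinearMap, g.2.comp e.symm.injective⟩
  invFun g := ⟨g.1.comp e.toLinearMap, g.2.comp e.injective⟩
  left_inv g := Subtype.ext (LinearMap.ext fun x => by simp)
  right_inv g := Subtype.ext (LinearMap.ext fun x => by simp)

lemma nat_card_sigma {ι : Type*} [Fintype ι] (f : ι → Type*) [∀ i, Finite (f i)] :
    Nat.card (Σ i, f i) = ∑ i, Nat.card (f i) := by
  letI := fun i => Fintype.ofFinite (f i)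
  simp [Nat.card_eq_fintype_card]

lemma card_hom_eq_sigma (X : Type*) [AddCommGroup X] [Module R X] :
    Nat.card (X →ₗ[R] A) =
      Nat.card (Σ K : Submodule R X, {g : (X ⧸ K) →ₗ[R] A // Injective g}) :=
  Nat.card_congr (homEquivSigma (R := R) (M := X) (N := A))

lemma card_quot_lt {X : Type*} [AddCommGroup X] [Module R X] [Finite X] {K : Submodule R X}
    (hK : K ≠ ⊥) : Nat.card (X ⧸ K) < Nat.card X := by
  have hsurj : Surjective K.mkQ := Submodule.mkQ_surjective K
  have hle : Nat.card (X ⧸ K) ≤ Nat.card X := Nat.card_le_card_of_surjective _ hsurj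
  rcases lt_or_eq_of_le hle with h | h
  · exact h
  · exfalso
    apply hK
    have hbij : Bijective K.mkQ :=
      (Nat.bijective_iff_surjective_and_card _).mpr ⟨hsurj, h.symm⟩
    have := LinearMap.ker_eq_bot.mpr hbij.injective
    rwa [Submodule.ker_mkQ] at this

lemma card_inj_eq_of_card_hom_eq (B : Type*) [AddCommGroup B] [Module R B]
    [Finite A] [Finite B]
    (h : ∀ (X : Type w) [AddCommGroup X] [Module R X] [Finite X],
      Nat.card (X →ₗ[R] A) = Nat.card (X →ₗ[R] B)) :
    ∀ (n : ℕ) (X : Type w) [AddCommGroup X] [Module R X] [Finite X], Nat.card X ≤ n →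
      Nat.card {g : X →ₗ[R] A // Injective g} = Nat.card {g : X →ₗ[R] B // Injective g} := by
  intro n
  induction n with
  | zero =>
    intro X _ _ _ hX
    have : 0 < Nat.card X := Nat.card_pos
    omega
  | succ n ih =>
    intro X _ _ _ hX
    classical
    haveI : Finite (Submodule R X) := finite_submodule
    haveI : Fintype (Submodule R X) := Fintype.ofFinite _
    haveI : ∀ (Y : Type w) [AddCommGroup Y] [Module R Y] [Finite Y],
        Finite (Y →ₗ[R] A) := fun Y _ _ _ => finite_linearMap
    haveI : ∀ (Y : Type w) [AddCommGroup Y] [Module R Y] [Finite Y],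
        Finite (Y →ₗ[R] B) := fun Y _ _ _ => finite_linearMap
    haveI : ∀ K : Submodule R X, Finite (X ⧸ K) := fun K => finite_quot K
    have hterm : ∀ K : Submodule R X, K ≠ ⊥ →
        Nat.card {g : (X ⧸ K) →ₗ[R] A // Injective g} =
        Nat.card {g : (X ⧸ K) →ₗ[R] B // Injective g} := by
      intro K hKne
      refine ih (X ⧸ K) ?_
      have := card_quot_lt (R := R) hKne
      omega
    haveI : ∀ K : Submodule R X, Finite {g : (X ⧸ K) →ₗ[R] A // Injective g} :=
      fun K => Subtype.finite
    haveI : ∀ K : Submodule R X, Finite {g : (X ⧸ K) →ₗ[R] B // Injective g} :=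
      fun K => Subtype.finite
    have hA : Nat.card (X →ₗ[R] A)
        = ∑ K : Submodule R X, Nat.card {g : (X ⧸ K) →ₗ[R] A // Injective g} := by
      rw [card_hom_eq_sigma A X, nat_card_sigma]
    have hB : Nat.card (X →ₗ[R] B)
        = ∑ K : Submodule R X, Nat.card {g : (X ⧸ K) →ₗ[R] B // Injective g} := by
      rw [card_hom_eq_sigma B X, nat_card_sigma]
    have hsum := hA.symm.trans ((h X).trans hB)
    rw [← Finset.add_sum_erase _ _ (Finset.mem_univ (⊥ : Submodule R X)),
      ← Finset.add_sum_erase _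
        (fun K => Nat.card {g : (X ⧸ K) →ₗ[R] B // Injective g})
        (Finset.mem_univ (⊥ : Submodule R X)),
      Finset.sum_congr rfl
        (fun K hK => hterm K (Finset.ne_of_mem_erase hK))] at hsum
    have hbot := Nat.add_right_cancel hsum
    have e := Submodule.quotEquivOfEqBot (⊥ : Submodule R X) rfl
    calc Nat.card {g : X →ₗ[R] A // Injective g}
        = Nat.card {g : (X ⧸ (⊥ : Submodule R X)) →ₗ[R] A // Injective g} :=
          (Nat.card_congr (injEquivOfLinearEquiv A e)).symm
      _ = Nat.card {g : (X ⧸ (⊥ : Submodule R X)) →ₗ[R] B // Injective g} := hbot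
      _ = Nat.card {g : X →ₗ[R] B // Injective g} :=
          Nat.card_congr (injEquivOfLinearEquiv B e)

/-- postcomposition equivalence -/
def homCongrRight {X Y Z : Type*} [AddCommGroup X] [Module R X] [AddCommGroup Y] [Module R Y]
    [AddCommGroup Z] [Module R Z] (e : Y ≃ₗ[R] Z) : (X →ₗ[R] Y) ≃ (X →ₗ[R] Z) where
  toFun f := e.toLinearMap.comp f
  invFun f := e.symm.toLinearMap.comp f
  left_inv f := LinearMap.ext fun x => by simp
  right_inv f := LinearMap.ext fun x => by simp

def homProdEquiv {X Y Z : Type*} [AddCommGroup X] [Module R X] [AddCommGroup Y] [Module R Y]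
    [AddCommGroup Z] [Module R Z] : (X →ₗ[R] Y × Z) ≃ (X →ₗ[R] Y) × (X →ₗ[R] Z) where
  toFun f := ((LinearMap.fst R Y Z).comp f, (LinearMap.snd R Y Z).comp f)
  invFun p := p.1.prod p.2
  left_inv f := LinearMap.ext fun x => by simp
  right_inv p := by
    refine Prod.ext (LinearMap.ext fun x => ?_) (LinearMap.ext fun x => ?_) <;> simp

lemma nonempty_linearEquiv_of_prod {A B C : Type w} [AddCommGroup A] [Module R A] [Finite A]
    [AddCommGroup B] [Module R B] [Finite B] [AddCommGroup C] [Module R C] [Finite C]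
    (e : (A × C) ≃ₗ[R] (B × C)) : Nonempty (A ≃ₗ[R] B) := by
  have hhom : ∀ (X : Type w) [AddCommGroup X] [Module R X] [Finite X],
      Nat.card (X →ₗ[R] A) = Nat.card (X →ₗ[R] B) := by
    intro X _ _ _
    haveI : Finite (X →ₗ[R] C) := finite_linearMap
    haveI : Nonempty (X →ₗ[R] C) := ⟨0⟩
    have h2 : Nat.card (X →ₗ[R] A) * Nat.card (X →ₗ[R] C)
        = Nat.card (X →ₗ[R] B) * Nat.card (X →ₗ[R] C) := by
      rw [← Nat.card_prod, ← Nat.card_prod,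
        Nat.card_congr (homProdEquiv (R := R) (X := X) (Y := A) (Z := C)).symm,
        Nat.card_congr (homCongrRight (X := X) e),
        Nat.card_congr (homProdEquiv (R := R) (X := X) (Y := B) (Z := C))]
    exact Nat.eq_of_mul_eq_mul_right Nat.card_pos h2
  have hinj := card_inj_eq_of_card_hom_eq A B hhom (Nat.card A) A le_rfl
  haveI : Finite (A →ₗ[R] A) := finite_linearMap
  haveI : Finite (A →ₗ[R] B) := finite_linearMap
  have hpos : 0 < Nat.card {g : A →ₗ[R] A // Injective g} := by
    haveI : Nonempty {g : A →ₗ[R] A // Injective g} := ⟨⟨LinearMap.id, fun x y h => h⟩⟩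
    exact Nat.card_pos
  rw [hinj] at hpos
  obtain ⟨⟨g, hg⟩⟩ := (Nat.card_pos_iff.mp hpos).1
  have hcard : Nat.card B = Nat.card A := by
    have h := Nat.card_congr e.toEquiv
    rw [Nat.card_prod, Nat.card_prod] at h
    exact (Nat.eq_of_mul_eq_mul_right Nat.card_pos h).symm
  exact ⟨LinearEquiv.ofBijective g (hg.bijective_of_nat_card_le hcard.le)⟩

end Fin

lemma unitRegular_of_isSemisimpleRing_of_finite (R : Type*) [Ring R] [Finite R]
    [IsSemisimpleRing R] : UnitRegular R := by
  intro a
  set f : R →ₗ[R] R := LinearMap.toSpanSingleton R R a with hf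
  obtain ⟨K', hK'⟩ := exists_isCompl (LinearMap.ker f)
  obtain ⟨I', hI'⟩ := exists_isCompl (LinearMap.range f)
  -- f restricted to K' is an iso onto range f
  have hmapsto : ∀ x ∈ K', f x ∈ LinearMap.range f := fun x _ => LinearMap.mem_range_self f x
  set e1 : K' →ₗ[R] LinearMap.range f := f.restrict hmapsto with he1
  have he1inj : Injective e1 := by
    rintro ⟨x, hx⟩ ⟨y, hy⟩ hxy
    have : f x = f y := congrArg Subtype.val hxy
    have hxym : x - y ∈ LinearMap.ker f ⊓ K' :=
      ⟨by simp [LinearMap.mem_ker, map_sub, this], K'.sub_mem hx hy⟩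
    rw [hK'.inf_eq_bot] at hxym
    exact Subtype.ext (by simpa [sub_eq_zero] using hxym)
  have he1surj : Surjective e1 := by
    rintro ⟨y, hy⟩
    obtain ⟨x, rfl⟩ := hy
    obtain ⟨k, hk, k', hk', rfl⟩ := Submodule.mem_sup.mp
      (by rw [hK'.sup_eq_top]; exact Submodule.mem_top (x := x))
    refine ⟨⟨k', hk'⟩, Subtype.ext ?_⟩
    have : f k = 0 := hk
    simp [he1, LinearMap.restrict_apply, map_add, this]
  set E1 : K' ≃ₗ[R] LinearMap.range f := LinearEquiv.ofBijective e1 ⟨he1inj, he1surj⟩ with hE1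
  -- cancellation gives ker f ≃ I'
  have eK : ((LinearMap.ker f) × K') ≃ₗ[R] R := Submodule.prodEquivOfIsCompl _ _ hK'
  have eI : ((LinearMap.range f) × I') ≃ₗ[R] R := Submodule.prodEquivOfIsCompl _ _ hI'
  have Estep : ((LinearMap.ker f) × (LinearMap.range f)) ≃ₗ[R] (I' × (LinearMap.range f)) :=
    (((LinearEquiv.refl R (LinearMap.ker f)).prodCongr E1.symm).trans eK).trans
      ((eI.symm).trans (LinearEquiv.prodComm R _ _))
  have hKI : Nonempty ((LinearMap.ker f) ≃ₗ[R] I') := nonempty_linearEquiv_of_prod Estep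
  obtain ⟨E2⟩ := hKI
  -- build the automorphism g : R ≃ₗ[R] R
  set g : R ≃ₗ[R] R :=
    ((Submodule.prodEquivOfIsCompl _ _ hI').symm.trans
      (E1.symm.prodCongr E2.symm)).trans
      (Submodule.prodEquivOfIsCompl K' (LinearMap.ker f) hK'.symm) with hg
  have key : ∀ x : R, f (g (f x)) = f x := by
    intro x
    have hmem : f x ∈ LinearMap.range f := LinearMap.mem_range_self f x
    have h1 := Submodule.prodEquivOfIsCompl_symm_apply_left (LinearMap.range f) I' hI'
      (⟨f x, hmem⟩ : LinearMap.range f)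
    rw [Submodule.coe_mk] at h1
    have : g (f x) = (E1.symm (⟨f x, hmem⟩ : LinearMap.range f) : R) := by
      rw [hg]
      simp only [LinearEquiv.trans_apply, h1, LinearEquiv.prodCongr_apply]
      simp [Submodule.coe_prodEquivOfIsCompl]
    rw [this]
    have hE1z : ∀ z : K', (E1 z : R) = f (z : R) := fun z => rfl
    rw [← hE1z (E1.symm (⟨f x, hmem⟩ : LinearMap.range f)), E1.apply_symm_apply]
  -- extract the unit
  have hlin : ∀ x : R, g x = x * g 1 := fun x => by
    conv_lhs => rw [← mul_one x, ← smul_eq_mul, map_smul, smul_eq_mul]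
  have hlin' : ∀ x : R, g.symm x = x * g.symm 1 := fun x => by
    conv_lhs => rw [← mul_one x, ← smul_eq_mul, map_smul, smul_eq_mul]
  have hu1 : g 1 * g.symm 1 = 1 := by
    have h := hlin' (g 1)
    rw [g.symm_apply_apply] at h
    exact h.symm
  have hu2 : g.symm 1 * g 1 = 1 := by
    have h := hlin (g.symm 1)
    rw [g.apply_symm_apply] at h
    exact h.symm
  refine ⟨⟨g 1, g.symm 1, hu1, hu2⟩, ?_⟩
  have hk := key 1
  have hf1 : f 1 = a := by simp [hf, LinearMap.toSpanSingleton_apply]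
  rw [hf1, hlin a] at hk
  have : f (a * g 1) = a * g 1 * a := by simp [hf, LinearMap.toSpanSingleton_apply, smul_eq_mul]
  rw [this] at hk
  exact hk.symm

namespace MAHelper

variable {k R : Type*} [Semiring k] [Semiring R] {G : Type*} [Monoid G]

/-- mapRange as a ring hom on monoid algebras -/
noncomputable def mapRange (f : k →+* R) : MonoidAlgebra k G →+* MonoidAlgebra R G :=
  MonoidAlgebra.liftNCRingHom (MonoidAlgebra.singleOneRingHom.comp f)
    (MonoidAlgebra.of R G) (fun x y => by
      simp only [RingHom.coe_comp, comp_apply, MonoidAlgebra.singleOneRingHom_apply,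
        MonoidAlgebra.of_apply, Commute, SemiconjBy,
        MonoidAlgebra.single_mul_single, one_mul, mul_one]
      show MonoidAlgebra.single 1 (f x) * MonoidAlgebra.single y 1
          = MonoidAlgebra.single y 1 * MonoidAlgebra.single 1 (f x)
      simp [MonoidAlgebra.single_mul_single])

@[simp] lemma mapRange_single (f : k →+* R) (a : G) (b : k) :
    mapRange f (MonoidAlgebra.single a b) = MonoidAlgebra.single a (f b) := by
  simp [mapRange, MonoidAlgebra.liftNCRingHom, MonoidAlgebra.liftNC_single,
    MonoidAlgebra.singleOneRingHom_apply, MonoidAlgebra.single_mul_single]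

lemma mapRange_apply (f : k →+* R) (x : MonoidAlgebra k G) (g : G) :
    (mapRange f x).coeff g = f (x.coeff g) := by
  induction x using MonoidAlgebra.induction_linear with
  | zero => simp
  | add a b ha hb => rw [map_add, MonoidAlgebra.coeff_add, Finsupp.add_apply, ha, hb,
      MonoidAlgebra.coeff_add, Finsupp.add_apply, map_add]
  | single a b =>
    rw [mapRange_single]
    rcases eq_or_ne a g with rfl | h
    · simp [MonoidAlgebra.coeff_single, Finsupp.single_apply]
    · simp [MonoidAlgebra.coeff_single, Finsupp.single_apply, h]

/-- ring equivalence of monoid algebras from coefficient ring equivalence -/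
noncomputable def mapRangeEquiv (e : k ≃+* R) : MonoidAlgebra k G ≃+* MonoidAlgebra R G :=
  RingEquiv.ofRingHom (mapRange (G := G) e.toRingHom) (mapRange (G := G) e.symm.toRingHom)
    (by apply MonoidAlgebra.ringHom_ext <;> intro a <;> simp)
    (by apply MonoidAlgebra.ringHom_ext <;> intro a <;> simp)

/-- monoid algebra over a finite product of semirings decomposes as a product -/
noncomputable def piEquiv {ι : Type*} [Fintype ι] (ks : ι → Type*) [∀ i, Semiring (ks i)]
    [Fintype G] :
    MonoidAlgebra (Π i, ks i) G ≃+* Π i, MonoidAlgebra (ks i) G := by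
  refine RingEquiv.ofBijective
    (RingHom.pi (fun i => mapRange (G := G) (Pi.evalRingHom ks i))) ⟨?_, ?_⟩
  · intro x y hxy
    ext g i
    have := congrFun hxy i
    have := congrArg (fun z => z.coeff g) this
    simpa [mapRange_apply, RingHom.pi_apply] using this
  · intro F
    classical
    refine ⟨MonoidAlgebra.ofCoeff (Finsupp.equivFunOnFinite.symm (fun g i => (F i).coeff g)), ?_⟩
    ext i g
    simp [mapRange_apply, RingHom.pi_apply]

end MAHelper


section Transfer

lemma UnitRegular.of_ringEquiv {R S : Type*} [Ring R] [Ring S] (e : R ≃+* S)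
    (h : UnitRegular R) : UnitRegular S := by
  intro a
  obtain ⟨u, hu⟩ := h (e.symm a)
  refine ⟨Units.map e.toRingHom.toMonoidHom u, ?_⟩
  have := congrArg e hu
  simpa [map_mul] using this

lemma UnitRegular.pi {ι : Type*} (Rf : ι → Type*) [∀ i, Ring (Rf i)]
    (h : ∀ i, UnitRegular (Rf i)) : UnitRegular (Π i, Rf i) := by
  intro a
  choose u hu using fun i => h i (a i)
  refine ⟨⟨fun i => u i, fun i => ((u i)⁻¹ : (Rf i)ˣ), ?_, ?_⟩, ?_⟩
  · funext i; simp
  · funext i; simp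
  · funext i; simpa using hu i

lemma finite_monoidAlgebra {k H : Type*} [Semiring k] [Monoid H] [Finite k] [Finite H] :
    Finite (MonoidAlgebra k H) :=
  Finite.of_injective (fun f : MonoidAlgebra k H => (⇑f.coeff : H → k))
    (fun a b h => MonoidAlgebra.coeff_injective (DFunLike.coe_injective h))

end Transfer

section Forward
variable {n : ℕ} {G : Type*} [Group G] [Finite G]

lemma squarefree_of_unitRegular (hn : 1 < n)
    (h : UnitRegular (MonoidAlgebra (ZMod n) G)) : Squarefree n := by
  haveI : NeZero n := ⟨by omega⟩
  intro x hx
  by_contra hunit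
  have hx0 : x ≠ 0 := by
    rintro rfl
    rw [mul_zero, zero_dvd_iff] at hx
    omega
  have hx2 : 2 ≤ x := by
    rcases x with _ | _ | x
    · exact absurd rfl hx0
    · exact absurd isUnit_one hunit
    · omega
  obtain ⟨k, hk⟩ := hx
  set m := n / x with hm
  have hmeq : m = x * k := by rw [hm, hk, mul_assoc, Nat.mul_div_cancel_left _ (by omega)]
  have hm0 : 0 < m := by
    rw [hmeq]
    rcases Nat.eq_zero_or_pos k with rfl | hkpos
    · simp at hk; omega
    · positivity
  have hmn : m < n := Nat.div_lt_self (by omega) (by omega)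
  have hmne : (m : ZMod n) ≠ 0 := by
    rw [Ne, ZMod.natCast_eq_zero_iff]
    intro hdvd
    exact absurd (Nat.le_of_dvd hm0 hdvd) (by omega)
  have hmm : (m : ZMod n) * (m : ZMod n) = 0 := by
    rw [← Nat.cast_mul, ZMod.natCast_eq_zero_iff, hmeq, hk]
    exact ⟨k, by ring⟩
  set a : MonoidAlgebra (ZMod n) G := MonoidAlgebra.single 1 ((m : ZMod n)) with ha
  obtain ⟨u, hu⟩ := h a
  have hzero : a * (u : MonoidAlgebra (ZMod n) G) * a = 0 := by
    ext g
    rw [ha, MonoidAlgebra.mul_single_one_apply, MonoidAlgebra.single_one_mul_apply]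
    rw [MonoidAlgebra.coeff_zero, Finsupp.zero_apply, mul_comm ((m : ZMod n)) _, mul_assoc, hmm, mul_zero]
  rw [hzero] at hu
  apply hmne
  have := congrArg (fun z : MonoidAlgebra (ZMod n) G => z.coeff 1) hu
  simpa [ha, MonoidAlgebra.coeff_single, Finsupp.single_eq_same] using this

lemma coprime_of_unitRegular (hn : 1 < n)
    (h : UnitRegular (MonoidAlgebra (ZMod n) G)) : Nat.gcd n (Nat.card G) = 1 := by
  haveI : NeZero n := ⟨by omega⟩
  letI : Fintype G := Fintype.ofFinite G
  classical
  set s : MonoidAlgebra (ZMod n) G := ∑ g : G, MonoidAlgebra.single g 1 with hs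
  have hs_apply : ∀ g : G, s.coeff g = 1 := by
    intro g
    rw [hs, MonoidAlgebra.coeff_sum, Finset.sum_apply']
    simp [MonoidAlgebra.coeff_single, Finsupp.single_apply]
  have hmul : ∀ x : MonoidAlgebra (ZMod n) G, s * x = (∑ g : G, x.coeff g) • s := by
    intro x
    induction x using MonoidAlgebra.induction_linear with
    | zero => simp
    | add a b hb hc =>
      rw [mul_add, hb, hc, ← add_smul]
      congr 1
      rw [← Finset.sum_add_distrib]
      exact Finset.sum_congr rfl fun g _ => rfl
    | single g0 c =>
      have : ∀ g : G, (MonoidAlgebra.single g0 c : MonoidAlgebra (ZMod n) G).coeff g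
          = if g = g0 then c else 0 := fun g => by
        rw [MonoidAlgebra.coeff_single]; exact Finsupp.single_apply.trans (by simp [eq_comm])
      rw [Finset.sum_congr rfl fun g _ => this g, Finset.sum_ite_eq' _ _ _]
      simp only [Finset.mem_univ, if_true]
      ext g'
      rw [MonoidAlgebra.mul_single_apply, hs_apply, one_mul, MonoidAlgebra.coeff_smul_apply,
        hs_apply, smul_eq_mul, mul_one]
  obtain ⟨u, hu⟩ := h s
  have hss : s * s = ((Fintype.card G : ZMod n)) • s := by
    rw [hmul s]
    congr 1
    rw [Finset.sum_congr rfl fun g _ => hs_apply g]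
    simp
  have key : s = ((∑ g : G, (u : MonoidAlgebra (ZMod n) G).coeff g) * (Fintype.card G : ZMod n)) • s := by
    conv_lhs => rw [hu]
    rw [hmul (u : MonoidAlgebra (ZMod n) G), smul_mul_assoc, hss, smul_smul]
  have h1 : (1 : ZMod n) = (∑ g : G, (u : MonoidAlgebra (ZMod n) G).coeff g) * (Fintype.card G : ZMod n) := by
    have h2 := congrArg (fun z : MonoidAlgebra (ZMod n) G => z.coeff (1 : G)) key
    rw [MonoidAlgebra.coeff_smul_apply, hs_apply, smul_eq_mul, mul_one] at h2
    exact h2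
  have hunit : IsUnit ((Fintype.card G : ZMod n)) :=
    IsUnit.of_mul_eq_one _ (by rw [mul_comm]; exact h1.symm)
  rw [ZMod.isUnit_iff_coprime] at hunit
  rw [Nat.card_eq_fintype_card]
  exact Nat.coprime_comm.mp hunit

end Forward


theorem zmod_monoidAlgebra_unitRegular_iff_of_finite
    (n : ℕ) (hn : 1 < n) (G : Type*) [Group G] [Finite G] :
    UnitRegular (MonoidAlgebra (ZMod n) G) ↔
      Squarefree n ∧ Nat.gcd n (Nat.card G) = 1 := by
  constructor
  · intro h
    exact ⟨squarefree_of_unitRegular hn h, coprime_of_unitRegular hn h⟩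
  · rintro ⟨hsq, hg⟩
    haveI : NeZero n := ⟨by omega⟩
    letI : Fintype G := Fintype.ofFinite G
    haveI : Small.{0} G := Countable.toSmall G
    letI : Fintype (Shrink.{0} G) := Fintype.ofEquiv G ((equivShrink G : G ≃ Shrink.{0} G))
    have hcardH : Fintype.card (Shrink.{0} G) = Nat.card G := by
      rw [← Fintype.card_congr ((equivShrink G : G ≃ Shrink.{0} G)), Nat.card_eq_fintype_card]
    have step : ∀ p : n.primeFactors, UnitRegular (MonoidAlgebra (ZMod (p : ℕ)) (Shrink.{0} G)) := by
      rintro ⟨p, hp⟩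
      haveI : Fact p.Prime := ⟨Nat.prime_of_mem_primeFactors hp⟩
      have hpn : p ∣ n := Nat.dvd_of_mem_primeFactors hp
      have hpG : ¬ p ∣ Nat.card G := by
        intro hdvd
        have h1 : p ∣ Nat.gcd n (Nat.card G) := Nat.dvd_gcd hpn hdvd
        rw [hg, Nat.dvd_one] at h1
        exact (Nat.prime_of_mem_primeFactors hp).one_lt.ne' h1
      haveI : NeZero ((Fintype.card (Shrink.{0} G) : ZMod p)) := ⟨by
        rw [hcardH, Ne, ZMod.natCast_eq_zero_iff]
        exact hpG⟩
      haveI : NeZero ((Nat.card (Shrink.{0} G) : ZMod p)) := by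
        rw [Nat.card_eq_fintype_card]; infer_instance
      haveI : Finite (MonoidAlgebra (ZMod p) (Shrink.{0} G)) := finite_monoidAlgebra
      exact unitRegular_of_isSemisimpleRing_of_finite _
    have hpi : UnitRegular (Π p : n.primeFactors, MonoidAlgebra (ZMod (p : ℕ)) (Shrink.{0} G)) :=
      UnitRegular.pi _ step
    have hprod : n = ∏ p : n.primeFactors, (p : ℕ) := by
      rw [Finset.prod_coe_sort_eq_attach, Finset.prod_attach n.primeFactors (fun p => p),
        Nat.prod_primeFactors_of_squarefree hsq]
    have hcop : Pairwise (Nat.Coprime on fun p : n.primeFactors => (p : ℕ)) := by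
      intro i j hij
      exact (Nat.coprime_primes (Nat.prime_of_mem_primeFactors i.2)
        (Nat.prime_of_mem_primeFactors j.2)).mpr (fun hc => hij (Subtype.ext hc))
    have eZ : ZMod n ≃+* Π p : n.primeFactors, ZMod (p : ℕ) :=
      (ZMod.ringEquivCongr hprod).trans (ZMod.prodEquivPi _ hcop)
    have e2 : MonoidAlgebra (ZMod n) (Shrink.{0} G) ≃+*
        Π p : n.primeFactors, MonoidAlgebra (ZMod (p : ℕ)) (Shrink.{0} G) :=
      (MAHelper.mapRangeEquiv eZ).trans (MAHelper.piEquiv _)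
    have hH : UnitRegular (MonoidAlgebra (ZMod n) (Shrink.{0} G)) :=
      UnitRegular.of_ringEquiv e2.symm hpi
    have eG : MonoidAlgebra (ZMod n) (Shrink.{0} G) ≃+* MonoidAlgebra (ZMod n) G :=
      (MonoidAlgebra.domCongr (ZMod n) (ZMod n) (Shrink.mulEquiv : Shrink.{0} G ≃* G)).toRingEquiv
    exact UnitRegular.of_ringEquiv eG hH
end

section
/- Let p be a prime, R a strongly unit nil-clean ring in which the element p·1 is nilpotent, and G a locally finite p-group (every finitely generated subgroup of G is finite and every element of G has order a power of p). Then the group ring RG is strongly unit nil-clean. -/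
section CommAux
variable {S : Type*} [CommRing S]

lemma comm_nilpotent_sub_one {p : ℕ} (hp : p.Prime)
    (hpn : IsNilpotent (p : S)) {a : S} (ha : a ^ p = 1) : IsNilpotent (a - 1) := by
  haveI := Fact.mk hp
  rw [← mem_nilradical, ← Ideal.Quotient.eq_zero_iff_mem]
  set Q := S ⧸ nilradical S with hQ
  haveI : IsReduced Q :=
    (Ideal.isRadical_iff_quotient_reduced _).mp (Ideal.radical_isRadical (0 : Ideal S))
  set π : S →+* Q := Ideal.Quotient.mk (nilradical S) with hπ
  rcases subsingleton_or_nontrivial Q with hs | hnt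
  · exact Subsingleton.elim _ _
  · have hpQ : (p : Q) = 0 := by
      have h1 : IsNilpotent (π (p : S)) := hpn.map π
      rw [map_natCast] at h1
      exact h1.eq_zero
    haveI : CharP Q p := (CharP.charP_iff_prime_eq_zero hp).mpr hpQ
    have h2 : (π a - 1) ^ p = 0 := by
      rw [sub_pow_char, ← map_pow, ha, map_one, one_pow, sub_self]
    have h3 : π a - 1 = 0 := IsNilpotent.eq_zero ⟨p, h2⟩
    rw [map_sub, map_one]
    exact h3

lemma comm_exists_idem {x : S} (h : IsNilpotent (x - x ^ 2)) :
    ∃ e : S, IsIdempotentElem e ∧ IsNilpotent (x - e) := by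
  let f : S →+* S ⧸ nilradical S := Ideal.Quotient.mk (nilradical S)
  have hker : ∀ y ∈ RingHom.ker f, IsNilpotent y := by
    intro y hy
    rw [RingHom.mem_ker, Ideal.Quotient.eq_zero_iff_mem, mem_nilradical] at hy
    exact hy
  have hidem : IsIdempotentElem (f x) := by
    have h0 : f (x - x ^ 2) = 0 :=
      Ideal.Quotient.eq_zero_iff_mem.mpr (mem_nilradical.mpr h)
    rw [map_sub, sub_eq_zero] at h0
    show f x * f x = f x
    rw [← map_mul, ← pow_two, ← h0]
  obtain ⟨e', he'idem, hfe⟩ :=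
    exists_isIdempotentElem_eq_of_ker_isNilpotent f hker (f x) ⟨x, rfl⟩ hidem
  refine ⟨e', he'idem, hker _ ?_⟩
  rw [RingHom.mem_ker, map_sub, hfe, sub_self]

end CommAux

section Glue
variable {R : Type*} [Ring R]

/-- The commutative ring `ℤ[X]/ker(aeval x)`, with its injective map to `R` hitting `x`. -/
lemma exists_comm_factor (x : R) :
    ∃ (A : Type) (_ : CommRing A) (φ : A →+* R) (x₀ : A),
      Function.Injective φ ∧ φ x₀ = x := by
  let ψ : Polynomial ℤ →+* R := (Polynomial.aeval x (R := ℤ)).toRingHom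
  refine ⟨Polynomial ℤ ⧸ RingHom.ker ψ, inferInstance, RingHom.kerLift ψ,
    Ideal.Quotient.mk _ Polynomial.X, RingHom.kerLift_injective ψ, ?_⟩
  show RingHom.kerLift ψ (Ideal.Quotient.mk _ Polynomial.X) = x
  rw [RingHom.kerLift_mk]
  simp [ψ]

lemma aux_snc_of_nilpotent_sub_sq {x : R} (h : IsNilpotent (x - x ^ 2)) :
    IsStronglyNilClean x := by
  obtain ⟨A, _, φ, x₀, hφ, rfl⟩ := exists_comm_factor x
  have hx₀ : IsNilpotent (x₀ - x₀ ^ 2) := by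
    obtain ⟨n, hn⟩ := h
    refine ⟨n, hφ ?_⟩
    rw [map_pow, map_sub, map_pow, hn, map_zero]
  obtain ⟨e, he, hnil⟩ := comm_exists_idem hx₀
  refine ⟨φ e, φ x₀ - φ e, ?_, ?_, ?_, by abel⟩
  · show φ e * φ e = φ e
    rw [← map_mul, he.eq]
  · rw [← map_sub]
    exact hnil.map φ
  · rw [← map_sub, ← map_mul, ← map_mul, mul_comm]

lemma aux_nilpotent_sub_one {p : ℕ} (hp : p.Prime) (hpn : IsNilpotent (p : R))
    {a : R} (ha : a ^ p = 1) : IsNilpotent (a - 1) := by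
  obtain ⟨A, _, φ, a₀, hφ, rfl⟩ := exists_comm_factor a
  have hpA : IsNilpotent (p : A) := by
    obtain ⟨n, hn⟩ := hpn
    refine ⟨n, hφ ?_⟩
    rw [map_pow, map_natCast, hn, map_zero]
  have ha₀ : a₀ ^ p = 1 := by
    apply hφ
    rw [map_pow, ha, map_one]
  have := comm_nilpotent_sub_one hp hpA ha₀
  rw [← map_one φ, ← map_sub]
  exact this.map φ

end Glue

section SNCfwd
variable {R : Type*} [Ring R]

lemma aux_nilpotent_sub_sq_of_snc {x : R} (h : IsStronglyNilClean x) :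
    IsNilpotent (x - x ^ 2) := by
  obtain ⟨e, b, he, hb, hc, rfl⟩ := h
  have hce : Commute b e := (hc : Commute e b).symm
  have key : (e + b) - (e + b) ^ 2 = b * (1 - e - e - b) := by
    have he' : e * e = e := he
    have h1 : (e + b) - (e + b) ^ 2 = b - e * b - b * e - b * b + (e - e * e) := by
      noncomm_ring
    rw [h1, he', hc]
    noncomm_ring
  rw [key]
  exact Commute.isNilpotent_mul_right
    (((Commute.one_right b).sub_right hce).sub_right hce |>.sub_right (Commute.refl b)) hb
end SNCfwd

section Eps
variable (R : Type*) [Ring R]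

/-- The augmentation homomorphism. -/
noncomputable def eps (G : Type*) [Monoid G] : MonoidAlgebra R G →+* R :=
  MonoidAlgebra.liftNCRingHom (RingHom.id R) 1 (fun _ _ => by
    simp only [MonoidHom.one_apply]
    exact Commute.one_right _)

variable {R}

@[simp] lemma eps_single {G : Type*} [Monoid G] (g : G) (r : R) :
    eps R G (MonoidAlgebra.single g r) = r := by
  simp [eps, MonoidAlgebra.liftNCRingHom, MonoidAlgebra.liftNC_single]

lemma eps_comp {G H : Type*} [Monoid G] [Monoid H] (f : G →* H) :
    (eps R H).comp (MonoidAlgebra.mapDomainRingHom R f) = eps R G := by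
  apply MonoidAlgebra.ringHom_ext <;> intro a <;>
    simp [MonoidAlgebra.mapDomainRingHom_apply, Finsupp.mapDomain_single]

lemma eps_mapDomain {G H : Type*} [Monoid G] [Monoid H] (f : G →* H)
    (x : MonoidAlgebra R G) :
    eps R H (MonoidAlgebra.mapDomainRingHom R f x) = eps R G x := by
  rw [← RingHom.comp_apply, eps_comp]

lemma single_central_commute {G : Type*} [Group G] {z : G} (hz : z ∈ Subgroup.center G)
    (x : MonoidAlgebra R G) : Commute (MonoidAlgebra.single z (1 : R)) x := by
  show _ = _
  ext y
  rw [MonoidAlgebra.single_mul_apply, MonoidAlgebra.mul_single_apply, one_mul, mul_one]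
  congr 1
  have hzi : z⁻¹ ∈ Subgroup.center G := Subgroup.inv_mem _ hz
  exact (Subgroup.mem_center_iff.mp hzi y).symm
end Eps

section Finite
variable {R : Type*} [Ring R]

lemma eps_ker_nil_finite (p : ℕ) (hp : p.Prime) (hpnil : IsNilpotent ((p : R))) :
    ∀ n : ℕ, ∀ (H : Type v) [Group H] [Finite H], Nat.card H ≤ n → IsPGroup p H →
      ∀ t : MonoidAlgebra R H, eps R H t = 0 → IsNilpotent t := by
  haveI := Fact.mk hp
  intro n
  induction n with
  | zero =>
    intro H _ _ hcard _ _ _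
    have := Nat.card_pos (α := H)
    omega
  | succ n ih =>
    intro H _ _ hcard hH t ht
    rcases subsingleton_or_nontrivial H with hs | hnt
    · -- trivial group: t = 0
      have h1 : t = MonoidAlgebra.single (1 : H) (t.coeff 1) := by
        ext g
        rw [Subsingleton.elim g (1 : H)]
        simp
      have h2 : t.coeff 1 = 0 := by
        have h3 := ht
        rw [h1, eps_single] at h3
        exact h3
      refine ⟨1, ?_⟩
      rw [pow_one, h1, h2]
      simp
    · -- center has a nontrivial element
      haveI : Nontrivial (Subgroup.center H) := hH.center_nontrivial
      obtain ⟨z, hz1⟩ := exists_ne (1 : Subgroup.center H)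
      have hzc : (z : H) ∈ Subgroup.center H := z.2
      have hzc1 : (z : H) ≠ 1 := fun h => hz1 (Subtype.ext h)
      obtain ⟨k, hk⟩ := (IsPGroup.iff_orderOf.mp hH) (z : H)
      have hk0 : k ≠ 0 := by
        intro h0
        rw [h0, pow_zero] at hk
        exact hzc1 (orderOf_eq_one_iff.mp hk)
      set z0 : H := (z : H) ^ p ^ (k - 1) with hz0def
      have hexp : p ^ (k - 1) * p = p ^ k := by
        rw [← pow_succ, Nat.sub_add_cancel (Nat.one_le_iff_ne_zero.mpr hk0)]
      have hz0p : z0 ^ p = 1 := by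
        rw [hz0def, ← pow_mul, hexp, ← hk]
        exact pow_orderOf_eq_one _
      have hz01 : z0 ≠ 1 := by
        intro h0
        have hdvd : orderOf (z : H) ∣ p ^ (k - 1) := orderOf_dvd_of_pow_eq_one h0
        rw [hk] at hdvd
        have h2 := Nat.le_of_dvd (pow_pos hp.pos _) hdvd
        have h3 : p ^ (k - 1) < p ^ k :=
          Nat.pow_lt_pow_right hp.one_lt (by omega)
        omega
      have hz0c : z0 ∈ Subgroup.center H := Subgroup.pow_mem _ hzc _
      set N : Subgroup H := Subgroup.zpowers z0 with hNdef
      haveI hNnorm : N.Normal := by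
        constructor
        intro b hb g
        have hac : b ∈ Subgroup.center H := (Subgroup.zpowers_le.mpr hz0c) hb
        have hgb : g * b * g⁻¹ = b := by
          rw [Subgroup.mem_center_iff.mp hac g, mul_assoc, mul_inv_cancel, mul_one]
        rwa [hgb]
      -- cardinality bookkeeping
      have hNcard : 1 < Nat.card N := by
        rw [hNdef, Nat.card_zpowers]
        have h1 : orderOf z0 ≠ 1 := fun h => hz01 (orderOf_eq_one_iff.mp h)
        have h2 : 0 < orderOf z0 := orderOf_pos z0
        omega
      have hdecomp : Nat.card H = Nat.card (H ⧸ N) * Nat.card N :=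
        Subgroup.card_eq_card_quotient_mul_card_subgroup N
      have hqpos : 0 < Nat.card (H ⧸ N) := Nat.card_pos
      have hqcard : Nat.card (H ⧸ N) ≤ n := by nlinarith
      have hK : IsPGroup p (H ⧸ N) := hH.to_quotient N
      set π : MonoidAlgebra R H →+* MonoidAlgebra R (H ⧸ N) :=
        MonoidAlgebra.mapDomainRingHom R (QuotientGroup.mk' N) with hπdef
      have hεπ : eps R (H ⧸ N) (π t) = 0 := by
        rw [hπdef, eps_mapDomain, ht]
      obtain ⟨m, hm⟩ := ih (H ⧸ N) hqcard hK (π t) hεπ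
      have hπtm : π (t ^ m) = 0 := by rw [map_pow, hm]
      -- the central element a = single z0 1 and c = a - 1
      set a : MonoidAlgebra R H := MonoidAlgebra.single z0 (1 : R) with hadef
      have ha_comm : ∀ x : MonoidAlgebra R H, Commute a x :=
        fun x => single_central_commute hz0c x
      set c : MonoidAlgebra R H := a - 1 with hcdef
      have hc_comm : ∀ x : MonoidAlgebra R H, Commute c x :=
        fun x => (ha_comm x).sub_left (Commute.one_left x)
      have hap : a ^ p = 1 := by
        rw [hadef, MonoidAlgebra.single_pow, hz0p, one_pow, MonoidAlgebra.one_def]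
      have hpRG : IsNilpotent ((p : MonoidAlgebra R H)) := by
        have h1 : IsNilpotent (MonoidAlgebra.singleOneRingHom (R := R) (M := H) (p : R)) :=
          hpnil.map _
        rwa [map_natCast] at h1
      have hcnil : IsNilpotent c := aux_nilpotent_sub_one hp hpRG hap
      -- powers of a: 1 - a ^ j is a multiple of c
      have hgeom : ∀ j : ℕ, ∃ q : MonoidAlgebra R H, 1 - a ^ j = c * q := by
        intro j
        induction j with
        | zero => exact ⟨0, by simp⟩
        | succ j ihj =>
          obtain ⟨q, hq⟩ := ihj
          refine ⟨q - a ^ j, ?_⟩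
          have h1 : (1 : MonoidAlgebra R H) - a ^ (j + 1) = (1 - a ^ j) + a ^ j * (1 - a) := by
            rw [pow_succ]
            noncomm_ring
          have h2 : a ^ j * (1 - a) = -(a ^ j * c) := by
            rw [hcdef]
            noncomm_ring
          rw [h1, hq, h2, ← (hc_comm (a ^ j)).eq, mul_sub, sub_eq_add_neg]
      -- the section map
      set σfun : H → H := fun x => Quotient.out (QuotientGroup.mk (s := N) x) with hσfun
      set σ : MonoidAlgebra R H → MonoidAlgebra R H :=
        fun w => (MonoidAlgebra.mapDomain σfun w : MonoidAlgebra R H) with hσ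
      -- kernel claim: anything killed by π is a multiple of c
      have hker : ∀ w : MonoidAlgebra R H, ∃ r : MonoidAlgebra R H, w = c * r + σ w := by
        intro w
        induction w using MonoidAlgebra.induction_linear with
        | zero =>
          refine ⟨0, ?_⟩
          rw [mul_zero, zero_add, hσ]
          exact (MonoidAlgebra.mapDomain_zero _).symm
        | add w1 w2 ih1 ih2 =>
          obtain ⟨r1, hr1⟩ := ih1
          obtain ⟨r2, hr2⟩ := ih2
          refine ⟨r1 + r2, ?_⟩
          have hσadd : σ (w1 + w2) = σ w1 + σ w2 := MonoidAlgebra.mapDomain_add _ _ _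
          rw [hσadd, mul_add]
          calc w1 + w2 = (c * r1 + σ w1) + (c * r2 + σ w2) := by rw [← hr1, ← hr2]
          _ = c * r1 + c * r2 + (σ w1 + σ w2) := by abel
        | single h r =>
          set h' : H := σfun h with hh'def
          have hmk : QuotientGroup.mk (s := N) h' = QuotientGroup.mk (s := N) h := by
            rw [hh'def, hσfun]
            exact Quotient.out_eq _
          have hν : h⁻¹ * h' ∈ N := by
            rw [← QuotientGroup.eq]
            exact hmk.symm
          have hfo : IsOfFinOrder z0 := isOfFinOrder_iff_pow_eq_one.mpr ⟨p, hp.pos, hz0p⟩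
          obtain ⟨j, hj⟩ := hfo.mem_powers_iff_mem_zpowers.mpr hν
          have hj' : z0 ^ j = h⁻¹ * h' := hj
          have hh' : h' = h * z0 ^ j := by
            rw [hj', ← mul_assoc, mul_inv_cancel, one_mul]
          have hms : σ (MonoidAlgebra.single h r) = MonoidAlgebra.single h' r := by
            rw [hσ]
            exact MonoidAlgebra.mapDomain_single
          obtain ⟨q, hq⟩ := hgeom j
          refine ⟨MonoidAlgebra.single h r * q, ?_⟩
          have e1 : MonoidAlgebra.single h r * a ^ j = MonoidAlgebra.single (h * z0 ^ j) r := by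
            rw [hadef, MonoidAlgebra.single_pow, one_pow, MonoidAlgebra.single_mul_single,
              mul_one]
          have e4 : MonoidAlgebra.single h r * (1 - a ^ j)
              = c * (MonoidAlgebra.single h r * q) := by
            rw [hq, ← mul_assoc, ← (hc_comm (MonoidAlgebra.single h r)).eq, mul_assoc]
          rw [hms, hh', ← e1, ← e4]
          noncomm_ring
      -- conclude
      obtain ⟨r, hr⟩ := hker (t ^ m)
      have hπ_eq : (π (t ^ m)).coeff = Finsupp.mapDomain (QuotientGroup.mk (s := N)) (t ^ m).coeff := rfl
      have hmap0 : σ (t ^ m) = 0 := by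
        rw [hσ, hσfun]
        show MonoidAlgebra.ofCoeff (Finsupp.mapDomain ((Quotient.out (α := H)) ∘ (QuotientGroup.mk (s := N))) (t ^ m).coeff) = 0
        rw [Finsupp.mapDomain_comp, ← hπ_eq, hπtm]
        exact MonoidAlgebra.mapDomain_zero _
      rw [hmap0, add_zero] at hr
      obtain ⟨mc, hmc⟩ := hcnil
      refine ⟨m * mc, ?_⟩
      rw [pow_mul, hr, (hc_comm r).mul_pow, hmc, zero_mul]
end Finite

section LF
variable {R : Type*} [Ring R]

lemma eps_ker_nil (p : ℕ) (hp : p.Prime) (hpnil : IsNilpotent ((p : R)))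
    {G : Type*} [Group G] (hlf : LocallyFiniteGroup G)
    (hpG : ∀ g : G, ∃ k : ℕ, orderOf g = p ^ k)
    (t : MonoidAlgebra R G) (ht : eps R G t = 0) : IsNilpotent t := by
  haveI := Fact.mk hp
  classical
  set Hs : Subgroup G := Subgroup.closure (t.coeff.support : Set G) with hHs
  have hfg : Hs.FG := (Subgroup.fg_iff _).mpr ⟨(t.coeff.support : Set G), rfl, t.coeff.support.finite_toSet⟩
  have hfin : (Hs : Set G).Finite := hlf Hs hfg
  haveI hfin' : Finite Hs := hfin.to_subtype
  have hPH : IsPGroup p Hs := by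
    rw [IsPGroup.iff_orderOf]
    intro h
    obtain ⟨k, hk⟩ := hpG (h : G)
    refine ⟨k, ?_⟩
    rw [← orderOf_injective Hs.subtype Hs.subtype_injective h]
    exact hk
  set t' : MonoidAlgebra R Hs := MonoidAlgebra.ofCoeff (Finsupp.subtypeDomain (· ∈ Hs) t.coeff) with ht'
  have hmap : MonoidAlgebra.mapDomainRingHom R Hs.subtype t' = t := by
    show MonoidAlgebra.mapDomain (Subtype.val) t' = t
    ext g
    show Finsupp.mapDomain Subtype.val t'.coeff g = t.coeff g
    by_cases hg : g ∈ Hs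
    · have h1 : g = ((⟨g, hg⟩ : Hs) : G) := rfl
      rw [h1, Finsupp.mapDomain_apply Subtype.val_injective]
      rfl
    · rw [Finsupp.mapDomain_notin_range]
      · symm
        rw [← Finsupp.notMem_support_iff]
        intro hsup
        exact hg (Subgroup.subset_closure hsup)
      · intro hrange
        obtain ⟨x, hx⟩ := hrange
        exact hg (hx ▸ x.2)
  have ht'0 : eps R Hs t' = 0 := by
    have h2 := eps_mapDomain (R := R) Hs.subtype t'
    rw [hmap, ht] at h2
    exact h2.symm
  have hnil' : IsNilpotent t' :=
    eps_ker_nil_finite p hp hpnil (Nat.card Hs) Hs le_rfl hPH t' ht'0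
  rw [← hmap]
  exact hnil'.map _
end LF

theorem monoidAlgebra_stronglyUnitNilClean_of_pGroup
    (p : ℕ) (hp : p.Prime) (R : Type*) [Ring R]
    (hR : StronglyUnitNilClean R) (hpnil : IsNilpotent ((p : R)))
    (G : Type*) [Group G] (hlf : LocallyFiniteGroup G)
    (hpG : ∀ g : G, ∃ k : ℕ, orderOf g = p ^ k) :
    StronglyUnitNilClean (MonoidAlgebra R G) := by
  intro x
  obtain ⟨u, hu⟩ := hR (eps R G x)
  refine ⟨Units.map (MonoidAlgebra.singleOneRingHom (R := R) (M := G)).toMonoidHom u, ?_⟩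
  apply aux_snc_of_nilpotent_sub_sq
  set y : MonoidAlgebra R G :=
    ((Units.map (MonoidAlgebra.singleOneRingHom (R := R) (M := G)).toMonoidHom u :
      (MonoidAlgebra R G)ˣ) : MonoidAlgebra R G) * x with hy
  have h1 : eps R G y = (u : R) * eps R G x := by
    rw [hy, map_mul]
    congr 1
    rw [Units.coe_map]
    show eps R G (MonoidAlgebra.singleOneRingHom (u : R)) = (u : R)
    show eps R G (MonoidAlgebra.single 1 (u : R)) = (u : R)
    exact eps_single _ _
  have h2 : IsNilpotent (eps R G (y - y ^ 2)) := by
    rw [map_sub, map_pow, h1]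
    exact aux_nilpotent_sub_sq_of_snc hu
  obtain ⟨nn, hnn⟩ := h2
  have h3 : eps R G ((y - y ^ 2) ^ nn) = 0 := by rw [map_pow, hnn]
  obtain ⟨mm, hmm⟩ := eps_ker_nil p hp hpnil hlf hpG _ h3
  exact ⟨nn * mm, by rw [pow_mul, hmm]⟩
end
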